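/- Let g be the signed coarsening sum g(m₁,…,m_n) = ∑ (-1)^{n-l} L!/(i₁!⋯i_l!) over all coarsenings of (m₁,…,m_n). For 1 ≤ a ≤ t−1 and any composition π of L−t, one has g(1^t,π) = ∑_{s=0}^{a} (-1)^{s+a} (L!/(s!(L−s)!))·g^{(s)}(a+1−s, 1^{t-a-1}, π), where g^{(s)} is the analogous function for compositions of L−s. -/

import Mathlib

/-- All coarsenings of a composition: the compositions obtained from it by
successively merging adjacent parts. -/
def coarsenings : List ℕ → List (List ℕ)
  | [] => [[]]
  | [a] => [[a]]
  | a :: b :: t => ((coarsenings (b :: t)).map (a :: ·)) ++ coarsenings ((a + b) :: t)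
termination_by m => m.length
decreasing_by all_goals simp

/-- The multinomial coefficient `L! / (i₁! ⋯ i_l!)`. -/
def mult (L : ℕ) (i : List ℕ) : ℤ :=
  ((Nat.factorial L / (i.map Nat.factorial).prod : ℕ) : ℤ)

/-- The signed coarsening sum
`g(m) = ∑ (-1)^(n-l) · L!/(i₁!⋯i_l!)` over all coarsenings `(i₁,…,i_l)` of `m`. -/
def g (L : ℕ) (m : List ℕ) : ℤ :=
  ((coarsenings m).map (fun i => (-1 : ℤ) ^ (m.length - i.length) * mult L i)).sum

lemma coarsenings_sum : ∀ m : List ℕ, ∀ i ∈ coarsenings m, i.sum = m.sum := by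
  intro m
  induction m using coarsenings.induct with
  | case1 => intro i hi; simp [coarsenings] at hi; simp [hi]
  | case2 a => intro i hi; simp [coarsenings] at hi; simp [hi]
  | case3 a b t ih1 ih2 =>
    intro i hi
    rw [coarsenings] at hi
    rcases List.mem_append.1 hi with h | h
    · obtain ⟨j, hj, rfl⟩ := List.mem_map.1 h
      have := ih1 j hj
      simp_all
    · have := ih2 i h
      simp_all; omega

lemma coarsenings_length : ∀ m : List ℕ, ∀ i ∈ coarsenings m, i.length ≤ m.length := by
  intro m
  induction m using coarsenings.induct with
  | case1 => intro i hi; simp [coarsenings] at hi; simp [hi]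
  | case2 a => intro i hi; simp [coarsenings] at hi; simp [hi]
  | case3 a b t ih1 ih2 =>
    intro i hi
    rw [coarsenings] at hi
    rcases List.mem_append.1 hi with h | h
    · obtain ⟨j, hj, rfl⟩ := List.mem_map.1 h
      have := ih1 j hj
      simp_all
    · have := ih2 i h
      simp only [List.length_cons] at this ⊢
      omega

lemma fact_prod_dvd : ∀ l : List ℕ, (l.map Nat.factorial).prod ∣ (l.sum).factorial := by
  intro l
  induction l with
  | nil => simp
  | cons x l ih =>
    simp only [List.map_cons, List.prod_cons, List.sum_cons]
    exact (mul_dvd_mul_left _ ih).trans (Nat.factorial_mul_factorial_dvd_factorial_add x l.sum)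

lemma mult_cons (x : ℕ) (i : List ℕ) :
    mult (x + i.sum) (x :: i) = ((x + i.sum).choose x : ℤ) * mult i.sum i := by
  unfold mult
  obtain ⟨q, hq⟩ := fact_prod_dvd i
  set P := (i.map Nat.factorial).prod with hP
  have hPpos : 0 < P := List.prod_pos (by
    intro a ha
    simp only [hP, List.mem_map] at ha
    obtain ⟨b, _, rfl⟩ := ha
    exact Nat.factorial_pos b)
  have h1 : i.sum.factorial / P = q := by rw [hq]; exact Nat.mul_div_cancel_left q hPpos
  have h2 : (x + i.sum).factorial / ((x :: i).map Nat.factorial).prod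
      = (x + i.sum).choose x * q := by
    have hfact : (x + i.sum).factorial = (x.factorial * P) * ((x + i.sum).choose x * q) := by
      have h3 := Nat.choose_mul_factorial_mul_factorial (Nat.le_add_right x i.sum)
      rw [Nat.add_sub_cancel_left] at h3
      rw [← h3, hq]; ring
    rw [List.map_cons, List.prod_cons, hfact]
    exact Nat.mul_div_cancel_left _ (Nat.mul_pos (Nat.factorial_pos x) hPpos)
  rw [h1, h2]
  push_cast
  ring

lemma g_cons (L x h : ℕ) (t' : List ℕ) (hL : x + (h :: t').sum = L) :
    g L (x :: h :: t') = (L.choose x : ℤ) * g (L - x) (h :: t') - g L ((x + h) :: t') := by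
  unfold g
  rw [coarsenings, List.map_append, List.sum_append, List.map_map]
  have e1 : ((coarsenings (h :: t')).map
      ((fun i => (-1 : ℤ) ^ ((x :: h :: t').length - i.length) * mult L i) ∘ (x :: ·))).sum
      = ((coarsenings (h :: t')).map
          (fun i => (L.choose x : ℤ) *
            ((-1 : ℤ) ^ ((h :: t').length - i.length) * mult (L - x) i))).sum := by
    apply congrArg
    apply List.map_congr_left
    intro i hi
    have hs : i.sum = (h :: t').sum := coarsenings_sum _ i hi
    have hmx : mult L (x :: i) = ((L.choose x : ℕ) : ℤ) * mult (L - x) i := by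
      have h4 := mult_cons x i
      rw [hs, hL] at h4
      rw [h4]
      congr 2
      omega
    simp only [Function.comp_apply, List.length_cons, hmx]
    rw [Nat.succ_sub_succ]
    push_cast
    ring
  have e2 : ((coarsenings ((x + h) :: t')).map
      (fun i => (-1 : ℤ) ^ ((x :: h :: t').length - i.length) * mult L i)).sum
      = ((coarsenings ((x + h) :: t')).map
          (fun i => (-1 : ℤ) *
            ((-1 : ℤ) ^ (((x + h) :: t').length - i.length) * mult L i))).sum := by
    apply congrArg
    apply List.map_congr_left
    intro i hi
    have hlen : i.length ≤ ((x + h) :: t').length := coarsenings_length _ i hi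
    have h5 : (x :: h :: t').length - i.length = (((x + h) :: t').length - i.length) + 1 := by
      simp only [List.length_cons] at *
      omega
    rw [h5, pow_succ]
    ring
  rw [e1, e2, List.sum_map_mul_left, List.sum_map_mul_left]
  ring

lemma alt_sum (a : ℕ) :
    ∑ s ∈ Finset.range (a + 1), (-1 : ℤ) ^ (s + a) * ((a + 1).choose s : ℤ) = 1 := by
  have h0 := Int.alternating_sum_range_choose_of_ne (n := a + 1) (by omega)
  rw [Finset.sum_range_succ, Nat.choose_self] at h0
  have h1 : ∑ s ∈ Finset.range (a + 1), (-1 : ℤ) ^ s * ((a + 1).choose s : ℤ)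
      = -((-1 : ℤ) ^ (a + 1)) := by push_cast at h0 ⊢; linarith
  calc ∑ s ∈ Finset.range (a + 1), (-1 : ℤ) ^ (s + a) * ((a + 1).choose s : ℤ)
      = (-1 : ℤ) ^ a * ∑ s ∈ Finset.range (a + 1), (-1 : ℤ) ^ s * ((a + 1).choose s : ℤ) := by
        rw [Finset.mul_sum]
        apply Finset.sum_congr rfl
        intro s _
        rw [pow_add]; ring
    _ = (-1 : ℤ) ^ a * (-((-1 : ℤ) ^ (a + 1))) := by rw [h1]
    _ = 1 := by rw [pow_succ]; ring_nf; rw [mul_comm a 2, pow_mul]; norm_num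

lemma main_aux : ∀ a : ℕ, ∀ Q : List ℕ, ∀ L : ℕ, a + 1 + Q.sum = L →
    g L (List.replicate (a + 1) 1 ++ Q)
      = ∑ s ∈ Finset.range (a + 1),
          (-1 : ℤ) ^ (s + a) * (L.choose s : ℤ) * g (L - s) ((a + 1 - s) :: Q) := by
  intro a
  induction a with
  | zero =>
    intro Q L h
    rw [Finset.sum_range_one]
    norm_num
  | succ a ih =>
    intro Q L h
    have hrep : List.replicate (a + 1 + 1) 1 ++ Q = List.replicate (a + 1) 1 ++ (1 :: Q) := by
      rw [List.replicate_succ']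
      simp
    have ih' := ih (1 :: Q) L (by simp at h ⊢; omega)
    rw [hrep, ih']
    have step : ∀ s ∈ Finset.range (a + 1),
        (-1 : ℤ) ^ (s + a) * (L.choose s : ℤ) * g (L - s) ((a + 1 - s) :: 1 :: Q)
        = (-1 : ℤ) ^ (s + a) * ((L.choose s : ℤ) * (((L - s).choose (a + 1 - s) : ℤ)
              * g (L - (a + 1)) (1 :: Q)))
            - (-1 : ℤ) ^ (s + a) * ((L.choose s : ℤ) * g (L - s) ((a + 1 + 1 - s) :: Q)) := by
      intro s hs
      have hsle : s ≤ a := Finset.mem_range_succ_iff.1 hs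
      have hQ : a + 1 + 1 + Q.sum = L := by simpa using h
      have hg := g_cons (L - s) (a + 1 - s) 1 Q (by simp; omega)
      rw [hg, show L - s - (a + 1 - s) = L - (a + 1) by omega,
        show a + 1 - s + 1 = a + 1 + 1 - s by omega]
      ring
    rw [Finset.sum_congr rfl step, Finset.sum_sub_distrib]
    have hQ : a + 1 + 1 + Q.sum = L := by simpa using h
    have key : ∑ s ∈ Finset.range (a + 1),
        (-1 : ℤ) ^ (s + a) * ((L.choose s : ℤ) * (((L - s).choose (a + 1 - s) : ℤ)
          * g (L - (a + 1)) (1 :: Q)))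
        = (L.choose (a + 1) : ℤ) * g (L - (a + 1)) (1 :: Q) := by
      have e : ∀ s ∈ Finset.range (a + 1),
          (-1 : ℤ) ^ (s + a) * ((L.choose s : ℤ) * (((L - s).choose (a + 1 - s) : ℤ)
            * g (L - (a + 1)) (1 :: Q)))
          = ((-1 : ℤ) ^ (s + a) * ((a + 1).choose s : ℤ))
              * ((L.choose (a + 1) : ℤ) * g (L - (a + 1)) (1 :: Q)) := by
        intro s hs
        have hsle : s ≤ a := Finset.mem_range_succ_iff.1 hs
        have hc := Nat.choose_mul (n := L) (show s ≤ a + 1 by omega)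
        have hc' : (L.choose s : ℤ) * ((L - s).choose (a + 1 - s) : ℤ)
            = (L.choose (a + 1) : ℤ) * ((a + 1).choose s : ℤ) := by exact_mod_cast hc.symm
        calc (-1 : ℤ) ^ (s + a) * ((L.choose s : ℤ) * (((L - s).choose (a + 1 - s) : ℤ)
              * g (L - (a + 1)) (1 :: Q)))
            = (-1 : ℤ) ^ (s + a) * (((L.choose s : ℤ) * ((L - s).choose (a + 1 - s) : ℤ))
              * g (L - (a + 1)) (1 :: Q)) := by ring
          _ = _ := by rw [hc']; ring
      rw [Finset.sum_congr rfl e, ← Finset.sum_mul, alt_sum, one_mul]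
    rw [key]
    conv_rhs => rw [Finset.sum_range_succ]
    have hlast : (-1 : ℤ) ^ (a + 1 + (a + 1)) * (L.choose (a + 1) : ℤ)
        * g (L - (a + 1)) ((a + 1 + 1 - (a + 1)) :: Q)
        = (L.choose (a + 1) : ℤ) * g (L - (a + 1)) (1 :: Q) := by
      rw [show a + 1 + (a + 1) = 2 * (a + 1) by ring, pow_mul,
        show a + 1 + 1 - (a + 1) = 1 by omega]
      norm_num
    rw [hlast]
    have hrest : ∀ s ∈ Finset.range (a + 1),
        (-1 : ℤ) ^ (s + (a + 1)) * (L.choose s : ℤ) * g (L - s) ((a + 1 + 1 - s) :: Q)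
        = -((-1 : ℤ) ^ (s + a) * ((L.choose s : ℤ) * g (L - s) ((a + 1 + 1 - s) :: Q))) := by
      intro s _
      rw [show s + (a + 1) = (s + a) + 1 by ring, pow_succ]
      ring
    rw [Finset.sum_congr rfl hrest, Finset.sum_neg_distrib]
    ring

/-- For `1 ≤ a ≤ t−1` and any composition `π` of `L−t`:
`g(1^t,π) = ∑_{s=0}^{a} (-1)^{s+a} (L!/(s!(L−s)!)) · g^{(s)}(a+1−s, 1^{t-a-1}, π)`,
where `g^{(s)}` is the analogous signed coarsening sum for compositions of `L−s`. -/
theorem g_expansion (L a t : ℕ) (π : List ℕ)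
    (ha : 1 ≤ a) (hat : a ≤ t - 1) (ht : 1 ≤ t)
    (hπ : ∀ x ∈ π, 1 ≤ x) (hsum : t + π.sum = L) :
    g L (List.replicate t 1 ++ π)
      = ∑ s ∈ Finset.range (a + 1),
          (-1 : ℤ) ^ (s + a) * (L.choose s : ℤ)
            * g (L - s) ((a + 1 - s) :: (List.replicate (t - a - 1) 1 ++ π)) := by
  have h1 : a + 1 ≤ t := by omega
  have hrep : List.replicate t 1 ++ π
      = List.replicate (a + 1) 1 ++ (List.replicate (t - a - 1) 1 ++ π) := by
    rw [← List.append_assoc, ← List.replicate_add]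
    congr 2
    omega
  rw [hrep]
  exact main_aux a _ L (by simp; omega)
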